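/- Let n ≥ 1 and let Sⁿ be the unit sphere in the Euclidean space ℝ^{n+1}. If A is a subset of Sⁿ such that 2⟨x, y⟩·x − y = y for all x, y ∈ A (i.e., every point of A is fixed by the geodesic symmetry of Sⁿ at every point of A), then A has at most 2 elements; moreover, for every x ∈ Sⁿ the pair {x, −x} is such a subset with exactly 2 elements. Consequently the 2-number of the n-sphere is #₂Sⁿ = 2. -/
import Mathlib


open scoped RealInnerProductSpace

/-- The 2-number of the unit sphere `Sⁿ ⊆ ℝ^(n+1)`: the supremum of the cardinalities of
subsets `A` of the sphere such that the geodesic symmetry `y ↦ 2⟪x,y⟫ • x - y` at any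
`x ∈ A` fixes every point of `A`. -/
noncomputable def sphereTwoNumber (n : ℕ) : ℕ∞ :=
  ⨆ (A : Set (EuclideanSpace ℝ (Fin (n + 1))))
    (_ : A ⊆ Metric.sphere 0 1)
    (_ : ∀ x ∈ A, ∀ y ∈ A, (2 * ⟪x, y⟫) • x - y = y), A.encard

private lemma sphere_card_le (n : ℕ) :
    ∀ A : Set (EuclideanSpace ℝ (Fin (n + 1))), A ⊆ Metric.sphere 0 1 →
      (∀ x ∈ A, ∀ y ∈ A, (2 * ⟪x, y⟫) • x - y = y) → A.encard ≤ 2 := by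
  intro A hA hsym
  rcases A.eq_empty_or_nonempty with rfl | ⟨x, hx⟩
  · simp
  have hsub : A ⊆ {x, -x} := by
    intro y hy
    have h := hsym x hx y hy
    have hxy : (⟪x, y⟫ : ℝ) • x = y := by
      have h2 : (2 * ⟪x, y⟫) • x = (2 : ℝ) • y := by
        rw [sub_eq_iff_eq_add] at h
        rw [h]; module
      have := congrArg (fun v => (2⁻¹ : ℝ) • v) h2
      simpa [smul_smul, mul_assoc] using this
    have hxnorm : ‖x‖ = 1 := by simpa using hA hx
    have hynorm : ‖y‖ = 1 := by simpa using hA hy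
    have habs : |⟪x, y⟫| = 1 := by
      have := congrArg norm hxy
      rwa [norm_smul, Real.norm_eq_abs, hxnorm, mul_one, hynorm] at this
    rcases abs_eq (by norm_num : (0:ℝ) ≤ 1) |>.mp habs with hc | hc
    · left; rw [← hxy, hc, one_smul]
    · right; rw [← hxy, hc]; module
  calc A.encard ≤ ({x, -x} : Set _).encard := Set.encard_mono hsub
    _ ≤ 2 := by
        apply le_trans (Set.encard_insert_le _ _)
        rw [Set.encard_singleton]
        decide

private lemma sphere_pair (n : ℕ) :
    ∀ x : EuclideanSpace ℝ (Fin (n + 1)), x ∈ Metric.sphere (0 : EuclideanSpace ℝ (Fin (n + 1))) 1 →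
      ({x, -x} : Set (EuclideanSpace ℝ (Fin (n + 1)))) ⊆ Metric.sphere 0 1 ∧
      (∀ a ∈ ({x, -x} : Set (EuclideanSpace ℝ (Fin (n + 1)))),
        ∀ b ∈ ({x, -x} : Set (EuclideanSpace ℝ (Fin (n + 1)))), (2 * ⟪a, b⟫) • a - b = b) ∧
      ({x, -x} : Set (EuclideanSpace ℝ (Fin (n + 1)))).encard = 2 := by
  intro x hx
  have hxnorm : ‖x‖ = 1 := by simpa using hx
  have hxx : (⟪x, x⟫ : ℝ) = 1 := by
    rw [real_inner_self_eq_norm_sq, hxnorm]; norm_num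
  have hxne : x ≠ -x := by
    intro h
    have hx0 : x = 0 := by
      have hadd : x + x = 0 := eq_neg_iff_add_eq_zero.mp h
      have h2 : (2 : ℝ) • x = 0 := by rw [two_smul]; exact hadd
      rcases smul_eq_zero.mp h2 with h' | h'
      · norm_num at h'
      · exact h'
    rw [hx0] at hxnorm; simp at hxnorm
  refine ⟨?_, ?_, ?_⟩
  · intro a ha
    rcases ha with rfl | ha
    · exact hx
    · simp at ha; subst ha
      simp [mem_sphere_zero_iff_norm, hxnorm]
  · intro a ha b hb
    rcases ha with rfl | ha
    · rcases hb with rfl | hb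
      · rw [hxx]; module
      · simp at hb; subst hb
        rw [inner_neg_right, hxx]; module
    · simp at ha; subst ha
      rcases hb with rfl | hb
      · rw [inner_neg_left, hxx]; module
      · simp at hb; subst hb
        rw [inner_neg_left, inner_neg_right, hxx]; module
  · exact Set.encard_pair hxne

/-- Antipodal sets of the round sphere `Sⁿ` have at most 2 points, the pairs `{x, -x}`
are antipodal sets with exactly 2 points, and consequently `#₂Sⁿ = 2`. -/
theorem sphereTwoNumber_eq_two (n : ℕ) (hn : 1 ≤ n) :
    (∀ A : Set (EuclideanSpace ℝ (Fin (n + 1))), A ⊆ Metric.sphere 0 1 →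
      (∀ x ∈ A, ∀ y ∈ A, (2 * ⟪x, y⟫) • x - y = y) → A.encard ≤ 2) ∧
    (∀ x : EuclideanSpace ℝ (Fin (n + 1)), x ∈ Metric.sphere (0 : EuclideanSpace ℝ (Fin (n + 1))) 1 →
      ({x, -x} : Set (EuclideanSpace ℝ (Fin (n + 1)))) ⊆ Metric.sphere 0 1 ∧
      (∀ a ∈ ({x, -x} : Set (EuclideanSpace ℝ (Fin (n + 1)))),
        ∀ b ∈ ({x, -x} : Set (EuclideanSpace ℝ (Fin (n + 1)))), (2 * ⟪a, b⟫) • a - b = b) ∧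
      ({x, -x} : Set (EuclideanSpace ℝ (Fin (n + 1)))).encard = 2) ∧
    sphereTwoNumber n = 2 := by
  refine ⟨sphere_card_le n, sphere_pair n, ?_⟩
  apply le_antisymm
  · apply iSup_le; intro A
    apply iSup_le; intro h1
    apply iSup_le; intro h2
    exact sphere_card_le n A h1 h2
  · set x : EuclideanSpace ℝ (Fin (n + 1)) := EuclideanSpace.single 0 (1 : ℝ) with hxdef
    have hx : x ∈ Metric.sphere (0 : EuclideanSpace ℝ (Fin (n + 1))) 1 := by
      simp [hxdef, mem_sphere_zero_iff_norm, EuclideanSpace.norm_single]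
    obtain ⟨hs, hc, he⟩ := sphere_pair n x hx
    calc (2 : ℕ∞) = ({x, -x} : Set _).encard := he.symm
      _ ≤ sphereTwoNumber n :=
        le_iSup_of_le {x, -x} (le_iSup_of_le hs (le_iSup_of_le hc le_rfl))
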